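/- Let B be a complex unital Banach algebra, z₀ ∈ ℂ, U an open neighborhood of z₀, n ≥ 1 an integer, b₀, …, b_{n−1} ∈ B, and R₀ : U → B holomorphic. Suppose the function R : U \ {z₀} → B defined by R(z) = Σ_{k=0}^{n−1} b_k·(z−z₀)^{−(k+1)} + R₀(z) satisfies the resolvent equation on U \ {z₀}. Then for all 0 ≤ k, l ≤ n−1: b_k·b_l = b_{k+l} if k+l ≤ n−1, and b_k·b_l = 0 if k+l > n−1. -/

import Mathlib

open Filter Finset Topology

section AuxLemmas

variable {E : Type*} [NormedAddCommGroup E] [NormedSpace ℂ E]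

private lemma aux_dslope_analytic {f : ℂ → E} (hf : AnalyticAt ℂ f 0) :
    AnalyticAt ℂ (dslope f 0) 0 := by
  obtain ⟨p, hp⟩ := hf
  exact ⟨_, hp.has_fpower_series_dslope_fslope⟩

private lemma aux_analyticAt_poly (m : ℕ) (c : ℕ → E) :
    AnalyticAt ℂ (fun w : ℂ => ∑ j ∈ Finset.range m, w ^ j • c j) 0 := by
  induction m with
  | zero => simp only [Finset.range_zero, Finset.sum_empty]; exact analyticAt_const
  | succ m ih =>
    have h : (fun w : ℂ => ∑ j ∈ Finset.range (m + 1), w ^ j • c j)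
        = fun w : ℂ => (∑ j ∈ Finset.range m, w ^ j • c j) + w ^ m • c m := by
      funext w; rw [Finset.sum_range_succ]
    rw [h]
    exact ih.add (((analyticAt_id (𝕜 := ℂ)).pow m).smul analyticAt_const)

private lemma aux_peel (m : ℕ) (c : ℕ → E) (f : ℂ → E) (hf : AnalyticAt ℂ f 0)
    (h : ∀ᶠ w in 𝓝[≠] (0 : ℂ), (∑ j ∈ Finset.range m, w ^ j • c j) + w ^ m • f w = 0) :
    (∀ j < m, c j = 0) ∧ ∀ᶠ w in 𝓝[≠] (0 : ℂ), f w = 0 := by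
  induction m generalizing c with
  | zero =>
    refine ⟨fun j hj => absurd hj (Nat.not_lt_zero j), ?_⟩
    filter_upwards [h] with w hw
    simpa using hw
  | succ m ih =>
    set g : ℂ → E := fun w => (∑ j ∈ Finset.range m, w ^ j • c (j + 1)) + w ^ m • f w with hgdef
    have hg : AnalyticAt ℂ g 0 :=
      (aux_analyticAt_poly m fun j => c (j + 1)).add
        (((analyticAt_id (𝕜 := ℂ)).pow m).smul hf)
    have key : ∀ᶠ w in 𝓝[≠] (0 : ℂ), c 0 + w • g w = 0 := by
      filter_upwards [h] with w hw
      have e1 : (∑ j ∈ Finset.range (m + 1), w ^ j • c j)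
          = (∑ i ∈ Finset.range m, w ^ (i + 1) • c (i + 1)) + w ^ 0 • c 0 :=
        Finset.sum_range_succ' _ m
      have e2 : ∀ i, w ^ (i + 1) • c (i + 1) = w • w ^ i • c (i + 1) := by
        intro i; rw [pow_succ', mul_smul]
      calc c 0 + w • g w
          = c 0 + (w • ∑ j ∈ Finset.range m, w ^ j • c (j + 1) + w • w ^ m • f w) := by
            rw [hgdef, smul_add]
        _ = (∑ j ∈ Finset.range (m + 1), w ^ j • c j) + w ^ (m + 1) • f w := by
            rw [e1, Finset.smul_sum]
            simp only [← e2, pow_zero, one_smul]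
            rw [smul_smul, ← pow_succ']
            abel
        _ = 0 := hw
    have hcont : ContinuousAt (fun w : ℂ => c 0 + w • g w) 0 :=
      continuousAt_const.add (continuousAt_id.smul hg.continuousAt)
    have h1 : Tendsto (fun w : ℂ => c 0 + w • g w) (𝓝[≠] (0 : ℂ)) (𝓝 (c 0)) := by
      have := (hcont.continuousWithinAt (s := {(0 : ℂ)}ᶜ)).tendsto
      simpa using this
    have heq : (fun _ : ℂ => (0 : E)) =ᶠ[𝓝[≠] (0 : ℂ)] fun w => c 0 + w • g w := by
      filter_upwards [key] with w hw; exact hw.symm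
    have h2 : Tendsto (fun w : ℂ => c 0 + w • g w) (𝓝[≠] (0 : ℂ)) (𝓝 0) :=
      tendsto_const_nhds.congr' heq
    have hc0 : c 0 = 0 := tendsto_nhds_unique h1 h2
    have hg0 : ∀ᶠ w in 𝓝[≠] (0 : ℂ), g w = 0 := by
      filter_upwards [key, self_mem_nhdsWithin] with w hw hw0
      rw [hc0, zero_add] at hw
      have hw0' : w ≠ 0 := hw0
      rcases smul_eq_zero.mp hw with h' | h'
      · exact absurd h' hw0'
      · exact h'
    obtain ⟨hco, hfo⟩ := ih (fun j => c (j + 1)) hg0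
    refine ⟨fun j hj => ?_, hfo⟩
    cases j with
    | zero => exact hc0
    | succ j => exact hco j (by omega)

private lemma aux_taylor_split (f : ℂ → E) (hf : AnalyticAt ℂ f 0) (N : ℕ) :
    ∃ (τ : ℕ → E) (g : ℂ → E), AnalyticAt ℂ g 0 ∧
      ∀ w : ℂ, f w = (∑ i ∈ Finset.range N, w ^ i • τ i) + w ^ N • g w := by
  induction N with
  | zero => exact ⟨fun _ => 0, f, hf, by simp⟩
  | succ N ih =>
    obtain ⟨τ, g, hg, hfg⟩ := ih
    refine ⟨fun i => if i = N then g 0 else τ i, dslope g 0, aux_dslope_analytic hg, fun w => ?_⟩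
    have hsplit : g w = g 0 + w • dslope g 0 w := by
      have h := sub_smul_dslope g 0 w
      rw [sub_zero] at h
      rw [h]; abel
    have hcong : ∀ i ∈ Finset.range N,
        w ^ i • (if i = N then g 0 else τ i) = w ^ i • τ i := by
      intro i hi
      rw [if_neg (Nat.ne_of_lt (Finset.mem_range.mp hi))]
    rw [hfg w, hsplit]
    have hb : (fun i => if i = N then g 0 else τ i) N = g 0 := by simp
    rw [Finset.sum_range_succ, Finset.sum_congr rfl hcong, hb, smul_add, add_assoc,
      smul_smul, ← pow_succ]

end AuxLemmas

section AlgLemmas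

variable {B : Type*} [Ring B] [Algebra ℂ B]

private lemma aux_alg1 (p : ℕ) (cc : ℕ → B) (rv G' : B) (w w' : ℂ) :
    (∑ j ∈ Finset.range (p + 1), w ^ j •
        (w' ^ (p + 1) • cc j - w' • (cc j * G') + (if j = 0 then 0 else cc (j - 1) * G')))
      + w ^ (p + 1) • (w' ^ (p + 1) • rv - w' • (rv * G') + (cc p * G' - G') + w • (rv * G'))
    = w' ^ (p + 1) • ((∑ j ∈ Finset.range (p + 1), w ^ j • cc j) + w ^ (p + 1) • rv)
      - w ^ (p + 1) • G'
      - (w' - w) • (((∑ j ∈ Finset.range (p + 1), w ^ j • cc j) + w ^ (p + 1) • rv) * G') := by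
  have hT1 : ∑ j ∈ Finset.range (p + 1), w ^ j • (w' ^ (p + 1) • cc j)
      = w' ^ (p + 1) • ∑ j ∈ Finset.range (p + 1), w ^ j • cc j := by
    rw [Finset.smul_sum]
    exact Finset.sum_congr rfl fun j _ => smul_comm _ _ _
  have hT2 : ∑ j ∈ Finset.range (p + 1), w ^ j • (w' • (cc j * G'))
      = w' • ((∑ j ∈ Finset.range (p + 1), w ^ j • cc j) * G') := by
    rw [Finset.sum_mul, Finset.smul_sum]
    refine Finset.sum_congr rfl fun j _ => ?_
    rw [smul_mul_assoc, smul_comm]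
  have haux : w • ((∑ j ∈ Finset.range (p + 1), w ^ j • cc j) * G')
      = ∑ j ∈ Finset.range (p + 1), w ^ (j + 1) • (cc j * G') := by
    rw [Finset.sum_mul, Finset.smul_sum]
    refine Finset.sum_congr rfl fun j _ => ?_
    rw [smul_mul_assoc, smul_smul, ← pow_succ']
  have hT3 : ∑ j ∈ Finset.range (p + 1), w ^ j • (if j = 0 then (0 : B) else cc (j - 1) * G')
      = w • ((∑ j ∈ Finset.range (p + 1), w ^ j • cc j) * G') - w ^ (p + 1) • (cc p * G') := by
    rw [Finset.sum_range_succ' (fun j => w ^ j • (if j = 0 then (0 : B) else cc (j - 1) * G')) p]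
    simp only [Nat.succ_ne_zero, if_neg, Nat.add_sub_cancel, if_pos rfl, smul_zero, add_zero,
      pow_zero]
    rw [haux, Finset.sum_range_succ]
    simp
  simp only [smul_sub, smul_add, Finset.sum_add_distrib, Finset.sum_sub_distrib]
  rw [hT1, hT2, hT3]
  simp only [smul_add, add_mul, smul_mul_assoc, sub_smul, smul_sub]
  module

private lemma aux_alg2 (q n : ℕ) (hn : n < q + 1) (C D gv : B) (γ : ℕ → B) (w' : ℂ) :
    (∑ i ∈ Finset.range (q + 1), w' ^ i •
        (D * γ i + (if i = n then C else 0) - (if i = 0 then 0 else C * γ (i - 1))))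
      + w' ^ (q + 1) • (D * gv - C * γ q - w' • (C * gv))
    = w' ^ n • C
      - w' • (C * ((∑ i ∈ Finset.range (q + 1), w' ^ i • γ i) + w' ^ (q + 1) • gv))
      + D * ((∑ i ∈ Finset.range (q + 1), w' ^ i • γ i) + w' ^ (q + 1) • gv) := by
  have hU1 : ∑ i ∈ Finset.range (q + 1), w' ^ i • (D * γ i)
      = D * ∑ i ∈ Finset.range (q + 1), w' ^ i • γ i := by
    rw [Finset.mul_sum]
    exact Finset.sum_congr rfl fun i _ => (mul_smul_comm _ _ _).symm
  have hU2 : ∑ i ∈ Finset.range (q + 1), w' ^ i • (if i = n then C else 0) = w' ^ n • C := by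
    have h : ∀ i, w' ^ i • (if i = n then C else (0 : B)) = if i = n then w' ^ i • C else 0 := by
      intro i; split_ifs <;> simp
    simp only [h]
    rw [Finset.sum_ite_eq' (Finset.range (q + 1)) n (fun i => w' ^ i • C),
      if_pos (Finset.mem_range.mpr hn)]
  have haux : w' • (C * ∑ i ∈ Finset.range (q + 1), w' ^ i • γ i)
      = ∑ i ∈ Finset.range (q + 1), w' ^ (i + 1) • (C * γ i) := by
    rw [Finset.mul_sum, Finset.smul_sum]
    refine Finset.sum_congr rfl fun i _ => ?_
    rw [mul_smul_comm, smul_smul, ← pow_succ']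
  have hU3 : ∑ i ∈ Finset.range (q + 1), w' ^ i • (if i = 0 then (0 : B) else C * γ (i - 1))
      = w' • (C * ∑ i ∈ Finset.range (q + 1), w' ^ i • γ i) - w' ^ (q + 1) • (C * γ q) := by
    rw [Finset.sum_range_succ' (fun i => w' ^ i • (if i = 0 then (0 : B) else C * γ (i - 1))) q]
    simp only [Nat.succ_ne_zero, if_neg, Nat.add_sub_cancel, if_pos rfl, smul_zero, add_zero,
      pow_zero]
    rw [haux, Finset.sum_range_succ]
    simp
  simp only [smul_sub, smul_add, Finset.sum_add_distrib, Finset.sum_sub_distrib]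
  rw [hU1, hU2, hU3]
  simp only [mul_add, mul_smul_comm, smul_add, smul_sub]
  module

end AlgLemmas

private lemma aux_chase {B : Type*} [Ring B] (n : ℕ) (hn : 1 ≤ n) (cc γ : ℕ → B)
    (hA : ∀ j < n, ∀ i < 2 * n,
      (if j = 0 then (0 : B) else cc (j - 1)) * γ i + (if i = n then cc j else 0)
        - (if i = 0 then 0 else cc j * γ (i - 1)) = 0) :
    ∀ j < n, ∀ m, m + j ≤ 2 * n - 2 →
      cc j * γ m = (if m + j = n - 1 then cc 0 else 0)
        + (if m < n ∧ n ≤ m + j then cc (m + j + 1 - n) else 0) := by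
  intro j
  induction j with
  | zero =>
    intro _ m hm
    have h := hA 0 (by omega) (m + 1) (by omega)
    rw [if_pos rfl, if_neg (Nat.succ_ne_zero m), zero_mul, zero_add, Nat.add_sub_cancel,
      sub_eq_zero] at h
    rw [← h]
    split_ifs <;> first | (exfalso; omega) | simp
  | succ j ih =>
    intro hj m hm
    have hrel := hA (j + 1) hj (m + 1) (by omega)
    rw [if_neg (Nat.succ_ne_zero j), if_neg (Nat.succ_ne_zero m), Nat.add_sub_cancel,
      Nat.add_sub_cancel, sub_eq_zero] at hrel
    have h2 := ih (by omega) (m + 1) (by omega)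
    rw [← hrel, h2]
    split_ifs <;>
      first
        | (exfalso; omega)
        | (simp only [add_zero, zero_add]; done)
        | (simp only [add_zero, zero_add]; congr 1; omega)


/-- A function `R` from a subset `S ⊆ ℂ` into a complex algebra satisfies the resolvent
equation on `S` if `R z₁ - R z₂ = (z₂ - z₁) • (R z₁ * R z₂)` for all `z₁, z₂ ∈ S`. -/
def ResolventEq {B : Type*} [Ring B] [Algebra ℂ B] (S : Set ℂ) (R : ℂ → B) : Prop :=
  ∀ z₁ ∈ S, ∀ z₂ ∈ S, R z₁ - R z₂ = (z₂ - z₁) • (R z₁ * R z₂)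

/-- If `R(z) = Σ_{k<n} b_k (z-z₀)^{-(k+1)} + R₀(z)` (with `R₀` holomorphic
on a neighborhood `U` of `z₀`) satisfies the resolvent equation on `U \ {z₀}`, then
`b_k b_l = b_{k+l}` if `k+l ≤ n-1` and `b_k b_l = 0` if `k+l > n-1`. -/
theorem laurent_coeff_mul_of_resolventEq
    (B : Type*) [NormedRing B] [NormedAlgebra ℂ B] [CompleteSpace B]
    (z₀ : ℂ) (U : Set ℂ) (hU : IsOpen U) (hz₀ : z₀ ∈ U)
    (n : ℕ) (hn : 1 ≤ n) (b : ℕ → B) (R₀ : ℂ → B) (hR₀ : DifferentiableOn ℂ R₀ U)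
    (R : ℂ → B)
    (hR : ∀ z ∈ U \ {z₀},
      R z = (∑ k ∈ Finset.range n, ((z - z₀) ^ (k + 1))⁻¹ • b k) + R₀ z)
    (hres : ResolventEq (U \ {z₀}) R) :
    ∀ k < n, ∀ l < n,
      (k + l ≤ n - 1 → b k * b l = b (k + l)) ∧ (n - 1 < k + l → b k * b l = 0) := by
  obtain ⟨p, rfl⟩ : ∃ p, n = p + 1 := ⟨n - 1, (Nat.succ_pred_eq_of_pos hn).symm⟩
  -- basic analyticity
  have hAz : AnalyticAt ℂ R₀ z₀ := hR₀.analyticAt (hU.mem_nhds hz₀)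
  set ρ : ℂ → B := fun w => R₀ (z₀ + w) with hρdef
  have hρanal : AnalyticAt ℂ ρ 0 := by
    have h0 : AnalyticAt ℂ R₀ (z₀ + 0) := by simpa using hAz
    have haff : AnalyticAt ℂ (fun w : ℂ => z₀ + w) 0 := analyticAt_const.add (analyticAt_id (𝕜 := ℂ))
    exact h0.comp haff
  set cc : ℕ → B := fun j => b (p - j) with hccdef
  set Gf : ℂ → B := fun w => (∑ j ∈ Finset.range (p + 1), w ^ j • cc j) + w ^ (p + 1) • ρ w
    with hGfdef
  obtain ⟨ε, hε, hball⟩ := Metric.isOpen_iff.mp hU z₀ hz₀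
  have hballmem : Metric.ball (0 : ℂ) ε ∈ 𝓝[≠] (0 : ℂ) :=
    mem_nhdsWithin_of_mem_nhds (Metric.ball_mem_nhds _ hε)
  -- K1
  have hK1 : ∀ w : ℂ, w ≠ 0 → z₀ + w ∈ U → w ^ (p + 1) • R (z₀ + w) = Gf w := by
    intro w hw0 hmem
    have hne : z₀ + w ≠ z₀ := fun h => hw0 (by simpa using add_eq_left.mp h)
    rw [hR (z₀ + w) ⟨hmem, hne⟩, add_sub_cancel_left, smul_add, Finset.smul_sum]
    have hterm : ∀ k ∈ Finset.range (p + 1),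
        w ^ (p + 1) • ((w ^ (k + 1))⁻¹ • b k) = w ^ (p - k) • cc (p - k) := by
      intro k hk
      have hk' : k < p + 1 := Finset.mem_range.mp hk
      have h1 : cc (p - k) = b k := by simp only [hccdef]; congr 1; omega
      rw [h1, smul_smul]
      congr 1
      have hpow : w ^ (p + 1) = w ^ (k + 1) * w ^ (p - k) := by rw [← pow_add]; congr 1; omega
      rw [hpow, mul_comm (w ^ (k + 1)), mul_assoc, mul_inv_cancel₀ (pow_ne_zero _ hw0), mul_one]
    have hreflect : ∑ k ∈ Finset.range (p + 1), w ^ (p - k) • cc (p - k)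
        = ∑ j ∈ Finset.range (p + 1), w ^ j • cc j := by
      simpa using Finset.sum_range_reflect (fun j => w ^ j • cc j) (p + 1)
    rw [Finset.sum_congr rfl hterm, hreflect]
  -- K2
  have hK2 : ∀ w ∈ Metric.ball (0 : ℂ) ε \ {0}, ∀ w' ∈ Metric.ball (0 : ℂ) ε \ {0},
      w' ^ (p + 1) • Gf w - w ^ (p + 1) • Gf w' = (w' - w) • (Gf w * Gf w') := by
    intro w hw w' hw'
    have hw0 : w ≠ 0 := hw.2
    have hw'0 : w' ≠ 0 := hw'.2
    have hwU : z₀ + w ∈ U := by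
      apply hball
      have hd : dist (z₀ + w) z₀ = dist w 0 := by simp [dist_eq_norm]
      rw [Metric.mem_ball, hd]
      exact Metric.mem_ball.mp hw.1
    have hw'U : z₀ + w' ∈ U := by
      apply hball
      have hd : dist (z₀ + w') z₀ = dist w' 0 := by simp [dist_eq_norm]
      rw [Metric.mem_ball, hd]
      exact Metric.mem_ball.mp hw'.1
    have h1 := hK1 w hw0 hwU
    have h2 := hK1 w' hw'0 hw'U
    have hmem1 : z₀ + w ∈ U \ {z₀} :=
      ⟨hwU, fun h => hw0 (by simpa using add_eq_left.mp (Set.mem_singleton_iff.mp h))⟩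
    have hmem2 : z₀ + w' ∈ U \ {z₀} :=
      ⟨hw'U, fun h => hw'0 (by simpa using add_eq_left.mp (Set.mem_singleton_iff.mp h))⟩
    have hre := hres _ hmem1 _ hmem2
    have hsub : z₀ + w' - (z₀ + w) = w' - w := by ring
    rw [hsub] at hre
    calc w' ^ (p + 1) • Gf w - w ^ (p + 1) • Gf w'
        = w' ^ (p + 1) • (w ^ (p + 1) • R (z₀ + w))
            - w ^ (p + 1) • (w' ^ (p + 1) • R (z₀ + w')) := by rw [h1, h2]
      _ = (w ^ (p + 1) * w' ^ (p + 1)) • (R (z₀ + w) - R (z₀ + w')) := by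
          rw [smul_sub, smul_smul, smul_smul, mul_comm (w' ^ (p + 1)) (w ^ (p + 1))]
      _ = (w ^ (p + 1) * w' ^ (p + 1)) • ((w' - w) • (R (z₀ + w) * R (z₀ + w'))) := by rw [hre]
      _ = (w' - w) • ((w ^ (p + 1) • R (z₀ + w)) * (w' ^ (p + 1) • R (z₀ + w'))) := by
          rw [smul_comm (w ^ (p + 1) * w' ^ (p + 1)) (w' - w)]
          congr 1
          rw [smul_mul_assoc, mul_smul_comm, smul_smul]
      _ = (w' - w) • (Gf w * Gf w') := by rw [h1, h2]
  -- Step B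
  have hStepB : ∀ w' ∈ Metric.ball (0 : ℂ) ε \ {0}, ∀ j < p + 1,
      w' ^ (p + 1) • cc j - w' • (cc j * Gf w')
        + (if j = 0 then (0 : B) else cc (j - 1) * Gf w') = 0 := by
    intro w' hw'
    have hFanal : AnalyticAt ℂ (fun w : ℂ => w' ^ (p + 1) • ρ w - w' • (ρ w * Gf w')
        + (cc p * Gf w' - Gf w') + w • (ρ w * Gf w')) 0 := by
      apply AnalyticAt.add
      · apply AnalyticAt.add
        · exact ((analyticAt_const (v := w' ^ (p + 1))).smul hρanal).sub
            ((analyticAt_const (v := w')).smul (hρanal.mul analyticAt_const))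
        · exact analyticAt_const
      · exact (analyticAt_id (𝕜 := ℂ)).smul (hρanal.mul analyticAt_const)
    have hev : ∀ᶠ w in 𝓝[≠] (0 : ℂ),
        (∑ j ∈ Finset.range (p + 1), w ^ j •
            (w' ^ (p + 1) • cc j - w' • (cc j * Gf w')
              + (if j = 0 then 0 else cc (j - 1) * Gf w')))
          + w ^ (p + 1) • (w' ^ (p + 1) • ρ w - w' • (ρ w * Gf w')
              + (cc p * Gf w' - Gf w') + w • (ρ w * Gf w')) = 0 := by
      filter_upwards [hballmem, self_mem_nhdsWithin] with w hw1 hw2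
      have hw0 : w ≠ 0 := hw2
      rw [aux_alg1 p cc (ρ w) (Gf w') w w',
        show (∑ j ∈ Finset.range (p + 1), w ^ j • cc j) + w ^ (p + 1) • ρ w = Gf w from rfl,
        hK2 w ⟨hw1, hw0⟩ w' hw']
      exact sub_self _
    exact fun j hj => (aux_peel (p + 1)
      (fun j => w' ^ (p + 1) • cc j - w' • (cc j * Gf w')
        + (if j = 0 then 0 else cc (j - 1) * Gf w'))
      (fun w => w' ^ (p + 1) • ρ w - w' • (ρ w * Gf w')
        + (cc p * Gf w' - Gf w') + w • (ρ w * Gf w'))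
      hFanal hev).1 j hj
  -- Taylor expansion of ρ, extended coefficient sequence
  obtain ⟨τ, g, hganal, hgsplit⟩ := aux_taylor_split ρ hρanal (p + 1)
  set γ : ℕ → B := fun i => if i < p + 1 then cc i else τ (i - (p + 1)) with hγdef
  have hGG : ∀ w : ℂ,
      Gf w = (∑ i ∈ Finset.range (2 * p + 1 + 1), w ^ i • γ i) + w ^ (2 * p + 1 + 1) • g w := by
    intro w
    have hsplitsum : ∑ i ∈ Finset.range ((p + 1) + (p + 1)), w ^ i • γ i
        = (∑ i ∈ Finset.range (p + 1), w ^ i • cc i)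
          + ∑ i ∈ Finset.range (p + 1), w ^ ((p + 1) + i) • τ i := by
      rw [Finset.sum_range_add]
      congr 1
      · refine Finset.sum_congr rfl fun i hi => ?_
        simp only [hγdef]
        rw [if_pos (Finset.mem_range.mp hi)]
      · refine Finset.sum_congr rfl fun i _ => ?_
        simp only [hγdef]
        rw [if_neg (by omega), Nat.add_sub_cancel_left]
    have h2 : w ^ (p + 1) • ρ w
        = (∑ i ∈ Finset.range (p + 1), w ^ ((p + 1) + i) • τ i)
          + w ^ ((p + 1) + (p + 1)) • g w := by
      rw [hgsplit w, smul_add, Finset.smul_sum]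
      congr 1
      · exact Finset.sum_congr rfl fun i _ => by rw [smul_smul, ← pow_add]
      · rw [smul_smul, ← pow_add]
    have hM : 2 * p + 1 + 1 = (p + 1) + (p + 1) := by ring
    rw [hM, hsplitsum]
    simp only [hGfdef]
    rw [h2, ← add_assoc]
  -- Step C
  have hA : ∀ j < p + 1, ∀ i < 2 * (p + 1),
      (if j = 0 then (0 : B) else cc (j - 1)) * γ i + (if i = p + 1 then cc j else 0)
        - (if i = 0 then 0 else cc j * γ (i - 1)) = 0 := by
    intro j hj
    set D : B := if j = 0 then 0 else cc (j - 1) with hD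
    have hGanal : AnalyticAt ℂ
        (fun w' : ℂ => D * g w' - cc j * γ (2 * p + 1) - w' • (cc j * g w')) 0 := by
      apply AnalyticAt.sub
      · exact (analyticAt_const.mul hganal).sub analyticAt_const
      · exact (analyticAt_id (𝕜 := ℂ)).smul (analyticAt_const.mul hganal)
    have hev2 : ∀ᶠ w' in 𝓝[≠] (0 : ℂ),
        (∑ i ∈ Finset.range (2 * p + 1 + 1), w' ^ i •
            (D * γ i + (if i = p + 1 then cc j else 0)
              - (if i = 0 then 0 else cc j * γ (i - 1))))
          + w' ^ (2 * p + 1 + 1) • (D * g w' - cc j * γ (2 * p + 1) - w' • (cc j * g w')) = 0 := by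
      filter_upwards [hballmem, self_mem_nhdsWithin] with w' hw1 hw2
      rw [aux_alg2 (2 * p + 1) (p + 1) (by omega) (cc j) D (g w') γ w', ← hGG w']
      have hDmul : D * Gf w' = if j = 0 then 0 else cc (j - 1) * Gf w' := by
        rw [hD]; split_ifs <;> simp
      rw [hDmul]
      exact hStepB w' ⟨hw1, hw2⟩ j hj
    intro i hi
    exact (aux_peel (2 * p + 1 + 1)
      (fun i => D * γ i + (if i = p + 1 then cc j else 0)
        - (if i = 0 then 0 else cc j * γ (i - 1)))
      (fun w' => D * g w' - cc j * γ (2 * p + 1) - w' • (cc j * g w'))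
      hGanal hev2).1 i (by omega)
  -- chase and conclude
  have hchase := aux_chase (p + 1) (by omega) cc γ hA
  intro k hk l hl
  have hkp : k ≤ p := by omega
  have hlp : l ≤ p := by omega
  have hγl : γ (p - l) = cc (p - l) := by
    simp only [hγdef]; rw [if_pos (by omega)]
  have e1 : cc (p - k) = b k := by simp only [hccdef]; congr 1; omega
  have e2 : cc (p - l) = b l := by simp only [hccdef]; congr 1; omega
  have hkey := hchase (p - k) (by omega) (p - l) (by omega)
  rw [hγl, e2, e1] at hkey
  constructor
  · intro hle
    rw [hkey]
    by_cases hc : k + l = p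
    · rw [if_pos (by omega), if_neg (by omega), add_zero]
      simp only [hccdef]
      congr 1
      omega
    · rw [if_neg (by omega), if_pos ⟨by omega, by omega⟩, zero_add]
      simp only [hccdef]
      congr 1
      omega
  · intro hgt
    rw [hkey, if_neg (by omega), if_neg (by omega)]
    simp
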